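/- The probabilities p_{(3,n)} = (6/3^n)·∑_{m=7}^{n} ((m−4)^2 − 2)·C(n−2, m−2) form a probability distribution on the integers n ≥ 7; that is, ∑_{n=7}^{∞} (6/3^n)·∑_{m=7}^{n} ((m−4)^2 − 2)·C(n−2, m−2) = 1. -/

import Mathlib

open Finset

lemma c2 (n : ℕ) : 2 * ((n.choose 2 : ℕ) : ℝ) = n * (n - 1) := by
  induction n with
  | zero => simp
  | succ n ih =>
    rw [Nat.choose_succ_succ]
    push_cast [Nat.choose_one_right]
    push_cast at ih
    linear_combination ih

lemma c3 (n : ℕ) : 6 * ((n.choose 3 : ℕ) : ℝ) = n * (n - 1) * (n - 2) := by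
  induction n with
  | zero => simp
  | succ n ih =>
    rw [Nat.choose_succ_succ]
    have h2 := c2 n
    push_cast
    push_cast at ih h2
    linear_combination ih + 3 * h2

lemma c4 (n : ℕ) : 24 * ((n.choose 4 : ℕ) : ℝ) = n * (n - 1) * (n - 2) * (n - 3) := by
  induction n with
  | zero => simp
  | succ n ih =>
    rw [Nat.choose_succ_succ]
    have h3 := c3 n
    push_cast
    push_cast at ih h3
    linear_combination ih + 4 * h3

lemma S0 (j : ℕ) : ∑ k ∈ range (j + 1), ((j.choose k : ℕ) : ℝ) = 2 ^ j := by
  rw [← Nat.cast_sum, Nat.sum_range_choose]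
  push_cast; ring

lemma S1 (j : ℕ) : 2 * ∑ k ∈ range (j + 1), (k : ℝ) * (j.choose k : ℝ) = j * 2 ^ j := by
  have hrefl : ∑ k ∈ range (j + 1), ((j - k : ℕ) : ℝ) * (j.choose (j - k) : ℝ)
      = ∑ k ∈ range (j + 1), (k : ℝ) * (j.choose k : ℝ) := by
    have := Finset.sum_range_reflect (fun k => (k : ℝ) * (j.choose k : ℝ)) (j + 1)
    simpa using this
  have hcongr : ∑ k ∈ range (j + 1), ((j - k : ℕ) : ℝ) * (j.choose (j - k) : ℝ)
      = ∑ k ∈ range (j + 1), ((j : ℝ) - k) * (j.choose k : ℝ) := by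
    apply Finset.sum_congr rfl
    intro k hk
    have hk' : k ≤ j := by simpa [Nat.lt_succ_iff] using hk
    rw [Nat.choose_symm hk', Nat.cast_sub hk']
  have hsplit : ∑ k ∈ range (j + 1), ((j : ℝ) - k) * (j.choose k : ℝ)
      = (j : ℝ) * ∑ k ∈ range (j + 1), (j.choose k : ℝ)
        - ∑ k ∈ range (j + 1), (k : ℝ) * (j.choose k : ℝ) := by
    rw [Finset.mul_sum, ← Finset.sum_sub_distrib]
    apply Finset.sum_congr rfl; intro k _; ring
  have h0 := S0 j
  linear_combination -hrefl + hcongr + hsplit + (j : ℝ) * h0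

lemma S2 (j : ℕ) : 4 * ∑ k ∈ range (j + 1), (k : ℝ) ^ 2 * (j.choose k : ℝ)
    = j * (j + 1) * 2 ^ j := by
  cases j with
  | zero => simp
  | succ i =>
    have hshift : ∑ k ∈ range (i + 2), (k : ℝ) ^ 2 * ((i+1).choose k : ℝ)
        = ∑ k ∈ range (i + 1), ((k : ℝ) + 1) ^ 2 * ((i+1).choose (k+1) : ℝ) := by
      rw [Finset.sum_range_succ' (fun k => (k : ℝ) ^ 2 * ((i+1).choose k : ℝ)) (i+1)]
      push_cast
      simp
    have hkey : ∀ k : ℕ, ((k : ℝ) + 1) * (((i+1).choose (k+1) : ℕ) : ℝ)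
        = ((i : ℝ) + 1) * (i.choose k : ℝ) := by
      intro k
      have h := Nat.add_one_mul_choose_eq i k
      have h' : ((i : ℝ) + 1) * (i.choose k : ℝ) = ((i+1).choose (k+1) : ℝ) * ((k : ℝ) + 1) := by
        exact_mod_cast h
      linear_combination -h'
    have h2 : ∑ k ∈ range (i + 1), ((k : ℝ) + 1) ^ 2 * ((i+1).choose (k+1) : ℝ)
        = ((i : ℝ) + 1) * ∑ k ∈ range (i + 1), ((k : ℝ) + 1) * (i.choose k : ℝ) := by
      rw [Finset.mul_sum]
      apply Finset.sum_congr rfl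
      intro k _
      linear_combination ((k : ℝ) + 1) * hkey k
    have h3 : ∑ k ∈ range (i + 1), ((k : ℝ) + 1) * (i.choose k : ℝ)
        = ∑ k ∈ range (i + 1), (k : ℝ) * (i.choose k : ℝ)
          + ∑ k ∈ range (i + 1), (i.choose k : ℝ) := by
      rw [← Finset.sum_add_distrib]
      apply Finset.sum_congr rfl; intro k _; ring
    have h0 := S0 i
    have h1 := S1 i
    push_cast
    rw [hshift, h2, h3]
    linear_combination (2 * (i : ℝ) + 2) * h1 + (4 * (i : ℝ) + 4) * h0

lemma Ffull (j : ℕ) : 4 * ∑ k ∈ range (j + 1), ((k : ℝ) ^ 2 - 4 * k + 2) * (j.choose k : ℝ)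
    = 2 ^ j * ((j : ℝ) ^ 2 - 7 * j + 8) := by
  have hsplit : ∑ k ∈ range (j + 1), ((k : ℝ) ^ 2 - 4 * k + 2) * (j.choose k : ℝ)
      = ∑ k ∈ range (j + 1), (k : ℝ) ^ 2 * (j.choose k : ℝ)
        - 4 * ∑ k ∈ range (j + 1), (k : ℝ) * (j.choose k : ℝ)
        + 2 * ∑ k ∈ range (j + 1), (j.choose k : ℝ) := by
    rw [Finset.mul_sum, Finset.mul_sum, ← Finset.sum_sub_distrib, ← Finset.sum_add_distrib]
    apply Finset.sum_congr rfl; intro k _; ring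
  have h0 := S0 j
  have h1 := S1 j
  have h2 := S2 j
  rw [hsplit]
  linear_combination h2 - 8 * h1 + 8 * h0

lemma innerL (N : ℕ) :
    ∑ m ∈ Finset.Icc 7 (N + 7), (((m : ℝ) - 4) ^ 2 - 2) * (((N + 5).choose (m - 2) : ℕ) : ℝ)
      = 2 ^ (N + 5) * (((N : ℝ) + 5) ^ 2 - 7 * ((N : ℝ) + 5) + 8) / 4
        - (2 - ((N : ℝ) + 5) - ((N : ℝ) + 5) * ((N : ℝ) + 4)
            - ((N : ℝ) + 5) * ((N : ℝ) + 4) * ((N : ℝ) + 3) / 6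
            + ((N : ℝ) + 5) * ((N : ℝ) + 4) * ((N : ℝ) + 3) * ((N : ℝ) + 2) / 12) := by
  set j := N + 5 with hj
  -- rewrite LHS as a range sum
  have hL : ∑ m ∈ Finset.Icc 7 (N + 7), (((m : ℝ) - 4) ^ 2 - 2) * ((j.choose (m - 2) : ℕ) : ℝ)
      = ∑ i ∈ range (N + 1), (((i : ℝ) + 3) ^ 2 - 2) * ((j.choose (5 + i) : ℕ) : ℝ) := by
    rw [← Finset.Ico_add_one_right_eq_Icc]
    rw [Finset.sum_Ico_eq_sum_range]
    have hn : N + 7 + 1 - 7 = N + 1 := by omega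
    rw [hn]
    apply Finset.sum_congr rfl
    intro i _
    have h7 : 7 + i - 2 = 5 + i := by omega
    rw [h7]
    push_cast
    ring_nf
  -- split the full range sum
  have hfull : ∑ k ∈ range (j + 1), ((k : ℝ) ^ 2 - 4 * k + 2) * (j.choose k : ℝ)
      = ∑ k ∈ range 5, ((k : ℝ) ^ 2 - 4 * k + 2) * (j.choose k : ℝ)
        + ∑ i ∈ range (N + 1), (((i : ℝ) + 3) ^ 2 - 2) * ((j.choose (5 + i) : ℕ) : ℝ) := by
    have h5 : (5 : ℕ) ≤ j + 1 := by omega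
    have hc := Finset.sum_Ico_consecutive
      (fun k => ((k : ℝ) ^ 2 - 4 * k + 2) * (j.choose k : ℝ)) (Nat.zero_le 5) h5
    simp only [← Finset.range_eq_Ico] at hc
    rw [← hc]
    congr 1
    rw [Finset.sum_Ico_eq_sum_range]
    have hn : j + 1 - 5 = N + 1 := by omega
    rw [hn]
    apply Finset.sum_congr rfl
    intro i _
    push_cast
    ring_nf
  -- evaluate head sum
  have hhead : ∑ k ∈ range 5, ((k : ℝ) ^ 2 - 4 * k + 2) * (j.choose k : ℝ)
      = 2 - ((N : ℝ) + 5) - ((N : ℝ) + 5) * ((N : ℝ) + 4)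
          - ((N : ℝ) + 5) * ((N : ℝ) + 4) * ((N : ℝ) + 3) / 6
          + ((N : ℝ) + 5) * ((N : ℝ) + 4) * ((N : ℝ) + 3) * ((N : ℝ) + 2) / 12 := by
    have e2 := c2 j
    have e3 := c3 j
    have e4 := c4 j
    simp only [Finset.sum_range_succ, Finset.sum_range_zero, Nat.choose_zero_right,
      Nat.choose_one_right]
    push_cast [hj] at e2 e3 e4 ⊢
    linear_combination (-1 : ℝ) * e2 - e3 / 6 + e4 / 12
  have hF := Ffull j
  have hjr : ((j : ℕ) : ℝ) = (N : ℝ) + 5 := by push_cast [hj]; ring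
  rw [hjr] at hF
  rw [hL]
  linear_combination hF / 4 - hhead - hfull

lemma PS (N : ℕ) :
    ∑ n ∈ Finset.range (N + 7),
      (if 7 ≤ n then
        (6 / 3 ^ n : ℝ) *
          ∑ m ∈ Finset.Icc 7 n, (((m : ℝ) - 4) ^ 2 - 2) * (Nat.choose (n - 2) (m - 2) : ℝ)
      else 0)
    = 1 - (2 ^ (N + 6) * ((3 * ((N : ℝ) + 6) ^ 2 - 15 * ((N : ℝ) + 6) + 24) / 4)
          + ((-((N : ℝ) + 6) ^ 4 + 10 * ((N : ℝ) + 6) ^ 3 - 23 * ((N : ℝ) + 6) ^ 2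
              + 38 * ((N : ℝ) + 6) - 36) / 4)) / 3 ^ (N + 6) := by
  induction N with
  | zero =>
    norm_num [Finset.sum_range_succ]
  | succ N ih =>
    rw [show N + 1 + 7 = (N + 7) + 1 by omega, Finset.sum_range_succ, ih]
    rw [if_pos (by omega : 7 ≤ N + 7)]
    rw [show N + 7 - 2 = N + 5 by omega]
    rw [innerL N]
    have h3 : (3 : ℝ) ^ (N + 6) ≠ 0 := by positivity
    have h3' : (3 : ℝ) ^ (N + 7) ≠ 0 := by positivity
    have h3'' : (3 : ℝ) ^ (N + 1 + 6) ≠ 0 := by positivity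
    push_cast
    simp only [pow_add]
    field_simp
    ring

open Filter Topology in
lemma polyGeo (r : ℝ) (hr : |r| < 1) (c0 c1 c2 c3 c4 : ℝ) :
    Tendsto (fun n : ℕ => (c0 + c1 * n + c2 * n ^ 2 + c3 * n ^ 3 + c4 * n ^ 4) * r ^ n)
      atTop (𝓝 0) := by
  have h0 := (tendsto_pow_const_mul_const_pow_of_abs_lt_one 0 hr).const_mul c0
  have h1 := (tendsto_pow_const_mul_const_pow_of_abs_lt_one 1 hr).const_mul c1
  have h2 := (tendsto_pow_const_mul_const_pow_of_abs_lt_one 2 hr).const_mul c2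
  have h3 := (tendsto_pow_const_mul_const_pow_of_abs_lt_one 3 hr).const_mul c3
  have h4 := (tendsto_pow_const_mul_const_pow_of_abs_lt_one 4 hr).const_mul c4
  have := ((((h0.add h1).add h2).add h3).add h4)
  simp only [mul_zero, add_zero] at this
  exact this.congr (fun n => by ring)


open Filter Topology

/-- The waiting-time probabilities `p_{(3,n)} = (6/3^n)·∑_{m=7}^n ((m-4)²-2)·C(n-2,m-2)`
for `n ≥ 7` sum to 1, i.e. they form a probability distribution on the integers `n ≥ 7`. -/
theorem superpattern_waiting_time_distribution :
    ∑' n : ℕ,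
      (if 7 ≤ n then
        (6 / 3 ^ n : ℝ) *
          ∑ m ∈ Finset.Icc 7 n, (((m : ℝ) - 4) ^ 2 - 2) * (Nat.choose (n - 2) (m - 2) : ℝ)
      else 0) = 1 := by
  set f : ℕ → ℝ := fun n =>
      (if 7 ≤ n then
        (6 / 3 ^ n : ℝ) *
          ∑ m ∈ Finset.Icc 7 n, (((m : ℝ) - 4) ^ 2 - 2) * (Nat.choose (n - 2) (m - 2) : ℝ)
      else 0) with hf
  have hnn : ∀ n, 0 ≤ f n := by
    intro n
    rw [hf]
    dsimp only
    split
    · apply mul_nonneg (by positivity)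
      apply Finset.sum_nonneg
      intro m hm
      have hm7 : (7 : ℝ) ≤ (m : ℝ) := by
        exact_mod_cast (Finset.mem_Icc.mp hm).1
      have : (0 : ℝ) ≤ ((m : ℝ) - 4) ^ 2 - 2 := by nlinarith
      positivity
    · exact le_rfl
  refine HasSum.tsum_eq ?_
  rw [hasSum_iff_tendsto_nat_of_nonneg hnn 1]
  rw [← tendsto_add_atTop_iff_nat 7]
  have t2 := polyGeo (2/3) (by rw [abs_of_pos]; norm_num; norm_num)
    (672/729) (336/729) (48/729) 0 0
  have t1 := polyGeo (1/3) (by rw [abs_of_pos]; norm_num; norm_num)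
    (57/729) (-11/1458) (-59/2916) (-7/1458) (-1/2916)
  have tt := (tendsto_const_nhds (x := (1:ℝ))).sub (t2.add t1)
  norm_num at tt
  refine tt.congr fun N => ?_
  rw [PS N]
  have h3 : (3 : ℝ) ^ N ≠ 0 := by positivity
  rw [div_pow, div_pow, one_pow]
  simp only [pow_add]
  field_simp
  ring
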